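/- Let u : ℝ → ℤ → ℂ be differentiable in x and satisfy ∂ₓuₙ = uₙ(uₙ₊₁ − uₙ₋₁) for all n. Define Kₙ = uₙ(uₙ₊₁(uₙ₊₂ + uₙ₊₁ + uₙ) − uₙ₋₁(uₙ + uₙ₋₁ + uₙ₋₂)). Then for all n: ∂ₓKₙ = Kₙ(uₙ₊₁ − uₙ₋₁) + uₙ(Kₙ₊₁ − Kₙ₋₁); that is, vₙ = Kₙ solves the linearization ∂ₓvₙ = vₙ(uₙ₊₁ − uₙ₋₁) + uₙ(vₙ₊₁ − vₙ₋₁) of the Volterra lattice, so the flow ∂ₜuₙ = Kₙ is a symmetry of the Volterra lattice. -/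

import Mathlib

/-- the right-hand side `Kₙ` of the first higher symmetry solves
the linearization of the Volterra lattice along any solution, i.e. the flow
`∂ₜuₙ = Kₙ` is a symmetry of the Volterra lattice. -/
theorem volterra_first_higher_symmetry
    (u : ℝ → ℤ → ℂ)
    (hu : ∀ (x : ℝ) (n : ℤ), HasDerivAt (fun x => u x n)
      (u x n * (u x (n + 1) - u x (n - 1))) x)
    (K : ℝ → ℤ → ℂ)
    (hK : ∀ (x : ℝ) (n : ℤ), K x n =
      u x n * (u x (n + 1) * (u x (n + 2) + u x (n + 1) + u x n)
        - u x (n - 1) * (u x n + u x (n - 1) + u x (n - 2)))) :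
    ∀ (x : ℝ) (n : ℤ), HasDerivAt (fun x => K x n)
      (K x n * (u x (n + 1) - u x (n - 1))
        + u x n * (K x (n + 1) - K x (n - 1))) x := by
  intro x n
  have hKe : ∀ m : ℤ, (fun x => K x m) = fun x =>
      u x m * (u x (m + 1) * (u x (m + 2) + u x (m + 1) + u x m)
        - u x (m - 1) * (u x m + u x (m - 1) + u x (m - 2))) :=
    fun m => funext fun x => hK x m
  rw [hKe n]
  have H := (hu x n).mul
    (((hu x (n+1)).mul (((hu x (n+2)).add (hu x (n+1))).add (hu x n))).sub
      ((hu x (n-1)).mul (((hu x n).add (hu x (n-1))).add (hu x (n-2)))))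
  simp only [Pi.mul_apply, Pi.add_apply, Pi.sub_apply] at H
  refine H.congr_deriv ?_
  simp only [hK, show n+1+1 = n+2 by ring, show n+1-1 = n by ring,
    show n-1+1 = n by ring, show n-1-1 = n-2 by ring,
    show n+2+1 = n+3 by ring, show n+2-1 = n+1 by ring,
    show n-2+1 = n-1 by ring, show n-2-1 = n-3 by ring,
    show n+1+2 = n+3 by ring, show n-1-2 = n-3 by ring]
  ring
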